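/- Adequacy: for all modal trees T, T', if T ↪* T', then ℱ(T) ⊢ ℱ(T') is derivable in RC. -/

import Mathlib

namespace TRC

/-- Strictly positive formulas of `L⁺`. -/
inductive SPF : Type where
  | top : SPF
  | var : ℕ → SPF
  | dia : ℕ → SPF → SPF
  | and : SPF → SPF → SPF

/-- The sequent system `K⁺`. -/
inductive KPlus : SPF → SPF → Prop where
  | id (φ) : KPlus φ φ
  | topI (φ) : KPlus φ .top
  | cut {φ ψ χ} : KPlus φ ψ → KPlus ψ χ → KPlus φ χ
  | andE₁ (φ ψ) : KPlus (.and φ ψ) φ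
  | andE₂ (φ ψ) : KPlus (.and φ ψ) ψ
  | andI {φ ψ χ} : KPlus φ ψ → KPlus φ χ → KPlus φ (.and ψ χ)
  | dist {φ ψ} (α) : KPlus φ ψ → KPlus (.dia α φ) (.dia α ψ)

/-- The Reflection Calculus `RC`. -/
inductive RC : SPF → SPF → Prop where
  | id (φ) : RC φ φ
  | topI (φ) : RC φ .top
  | cut {φ ψ χ} : RC φ ψ → RC ψ χ → RC φ χ
  | andE₁ (φ ψ) : RC (.and φ ψ) φ
  | andE₂ (φ ψ) : RC (.and φ ψ) ψ
  | andI {φ ψ χ} : RC φ ψ → RC φ χ → RC φ (.and ψ χ)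
  | dist {φ ψ} (α) : RC φ ψ → RC (.dia α φ) (.dia α ψ)
  | trans (α φ) : RC (.dia α (.dia α φ)) (.dia α φ)
  | mono {α β} (φ) : β < α → RC (.dia α φ) (.dia β φ)
  | jax {α β} (φ ψ) : β < α → RC (.and (.dia α φ) (.dia β ψ)) (.dia α (.and φ (.dia β ψ)))

/-- Modal depth. -/
def SPF.md : SPF → ℕ
  | .top => 0
  | .var _ => 0
  | .dia _ φ => φ.md + 1
  | .and φ ψ => max φ.md ψ.md

/-- Modal trees. -/
inductive MTree : Type where
  | node : List ℕ → List (ℕ × MTree) → MTree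

/-- Sum of modal trees. -/
def MTree.sum : MTree → MTree → MTree
  | .node Δ₁ Γ₁, .node Δ₂ Γ₂ => .node (Δ₁ ++ Δ₂) (Γ₁ ++ Γ₂)

mutual
/-- Height of a modal tree. -/
def MTree.height : MTree → ℕ
  | .node _ Γ => heightL Γ
def heightL : List (ℕ × MTree) → ℕ
  | [] => 0
  | (_, S) :: Γ => max (S.height + 1) (heightL Γ)
end

mutual
/-- `T.IsPos k`: the (1-indexed) string `k` is a position of `T`. -/
def MTree.IsPos : MTree → List ℕ → Prop
  | _, [] => True
  | .node _ Γ, i :: k => isPosL Γ i k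
def isPosL : List (ℕ × MTree) → ℕ → List ℕ → Prop
  | [], _, _ => False
  | _ :: _, 0, _ => False
  | (_, S) :: _, 1, k => S.IsPos k
  | _ :: Γ, n+2, k => isPosL Γ (n+1) k
end

mutual
/-- Subtree of `T` at position `k` (returning a default junk value off positions). -/
def MTree.subtree : MTree → List ℕ → MTree
  | T, [] => T
  | .node Δ Γ, i :: k => subtreeL (.node Δ Γ) Γ i k
def subtreeL : MTree → List (ℕ × MTree) → ℕ → List ℕ → MTree
  | d, [], _, _ => d
  | d, _ :: _, 0, _ => d
  | _, (_, S) :: _, 1, k => S.subtree k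
  | d, _ :: Γ, n+2, k => subtreeL d Γ (n+1) k
end

mutual
/-- `T.replace S k`: replace the subtree of `T` at position `k` by `S`. -/
def MTree.replace : MTree → MTree → List ℕ → MTree
  | _, S, [] => S
  | .node Δ Γ, S, i :: k => .node Δ (replaceL Γ S i k)
def replaceL : List (ℕ × MTree) → MTree → ℕ → List ℕ → List (ℕ × MTree)
  | [], _, _, _ => []
  | Γ, _, 0, _ => Γ
  | (α, C) :: Γ, S, 1, k => (α, C.replace S k) :: Γ
  | x :: Γ, S, n+2, k => x :: replaceL Γ S (n+1) k
end

/-- Names of the eight rewriting rules of TRC. -/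
inductive Rule : Type where
  | rhoP | rhoM | sigma | piP | piM | four | lam | jay
  deriving DecidableEq

/-- One rewriting step performed at the root. -/
inductive RootStep : Rule → MTree → MTree → Prop where
  | rhoP {Δ Γ i p} (hi : 1 ≤ i) (h : Δ[i-1]? = some p) :
      RootStep .rhoP (.node Δ Γ) (.node (p :: Δ) Γ)
  | rhoM {Δ Γ i} (hi : 1 ≤ i) (h : i - 1 < Δ.length) :
      RootStep .rhoM (.node Δ Γ) (.node (Δ.eraseIdx (i-1)) Γ)
  | sigma {Δ Γ i j x y} (hi : 1 ≤ i) (hj : 1 ≤ j) (hij : i ≠ j)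
      (hx : Γ[i-1]? = some x) (hy : Γ[j-1]? = some y) :
      RootStep .sigma (.node Δ Γ) (.node Δ ((Γ.set (j-1) x).set (i-1) y))
  | piP {Δ Γ i x} (hi : 1 ≤ i) (hx : Γ[i-1]? = some x) :
      RootStep .piP (.node Δ Γ) (.node Δ (x :: Γ))
  | piM {Δ Γ i} (hi : 1 ≤ i) (h : i - 1 < Γ.length) :
      RootStep .piM (.node Δ Γ) (.node Δ (Γ.eraseIdx (i-1)))
  | four {Δ Γ i j β Δt Γt S} (hi : 1 ≤ i) (hj : 1 ≤ j)
      (hΓ : Γ[i-1]? = some (β, MTree.node Δt Γt)) (hΓt : Γt[j-1]? = some (β, S)) :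
      RootStep .four (.node Δ Γ) (.node Δ (Γ.set (i-1) (β, S)))
  | lam {Δ Γ i α β S} (hi : 1 ≤ i) (hβ : β < α) (hΓ : Γ[i-1]? = some (α, S)) :
      RootStep .lam (.node Δ Γ) (.node Δ (Γ.set (i-1) (β, S)))
  | jay {Δ Γ i j α β Δt Γt S} (hi : 1 ≤ i) (hj : 1 ≤ j) (hij : i ≠ j) (hβ : β < α)
      (hΓi : Γ[i-1]? = some (α, MTree.node Δt Γt)) (hΓj : Γ[j-1]? = some (β, S)) :
      RootStep .jay (.node Δ Γ)
        (.node Δ ((Γ.set (i-1) (α, MTree.node Δt (Γt ++ [(β, S)]))).eraseIdx (j-1)))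

/-- One step of the rule `r`, applied at some position. -/
def StepR (r : Rule) (T T' : MTree) : Prop :=
  ∃ k S, T.IsPos k ∧ RootStep r (T.subtree k) S ∧ T' = T.replace S k

/-- One step of the rewriting relation `↪`. -/
def Step (T T' : MTree) : Prop := ∃ r, StepR r T T'

/-- The rewriting relation `↪*`. -/
def Steps : MTree → MTree → Prop := Relation.ReflTransGen Step

/-- TRC-equivalence `↔*`. -/
def TEquiv (T T' : MTree) : Prop := Steps T T' ∧ Steps T' T

/-- `T ↪^Ω S` : rewriting applying the rules of `Ω` in order, one step each. -/
inductive StepsOf : List Rule → MTree → MTree → Prop where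
  | nil (T) : StepsOf [] T T
  | cons {r Ω T U S} : StepR r T U → StepsOf Ω U S → StepsOf (r :: Ω) T S

def AtomicStep (T S : MTree) : Prop := StepR .rhoP T S ∨ StepR .rhoM T S
def DecreasingStep (T S : MTree) : Prop := StepR .piM T S ∨ StepR .four T S
def ModalStep (T S : MTree) : Prop := StepR .lam T S ∨ StepR .jay T S

/-- Finite conjunctions (empty conjunction is `⊤`). -/
def bigAnd : List SPF → SPF
  | [] => .top
  | φ :: l => .and φ (bigAnd l)

mutual
/-- The embedding `ℱ` of modal trees into formulas. -/
def MTree.toFormula : MTree → SPF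
  | .node Δ Γ => .and (bigAnd (Δ.map SPF.var)) (diamL Γ)
def diamL : List (ℕ × MTree) → SPF
  | [] => .top
  | (α, S) :: Γ => .and (.dia α S.toFormula) (diamL Γ)
end

/-- The embedding `𝒯` of formulas into modal trees. -/
def SPF.toTree : SPF → MTree
  | .top => .node [] []
  | .var p => .node [p] []
  | .dia α φ => .node [] [(α, φ.toTree)]
  | .and φ ψ => φ.toTree.sum ψ.toTree

/-- Nonempty conjunction `φ₁ ∧ (φ₂ ∧ (… ∧ φₙ))`. -/
def conjNE : SPF → List SPF → SPF
  | φ, [] => φ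
  | φ, ψ :: l => .and φ (conjNE ψ l)

end TRC
namespace TRC

theorem mem_of_get? {α : Type*} {l : List α} {n : ℕ} {a : α} (h : l[n]? = some a) : a ∈ l := by
  obtain ⟨h1, h2⟩ := List.getElem?_eq_some_iff.mp h
  exact h2 ▸ List.getElem_mem h1

theorem RC.and_mono {a b c d : SPF} (h1 : RC a c) (h2 : RC b d) :
    RC (.and a b) (.and c d) :=
  .andI (.cut (.andE₁ a b) h1) (.cut (.andE₂ a b) h2)

theorem bigAnd_elim {l : List SPF} {φ : SPF} (h : φ ∈ l) : RC (bigAnd l) φ := by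
  induction l with
  | nil => simp at h
  | cons a l ih =>
    rcases List.mem_cons.mp h with h | h
    · subst h; exact .andE₁ _ _
    · exact .cut (.andE₂ _ _) (ih h)

theorem bigAnd_intro {l : List SPF} {χ : SPF} (h : ∀ φ ∈ l, RC χ φ) :
    RC χ (bigAnd l) := by
  induction l with
  | nil => exact .topI _
  | cons a l ih =>
    exact .andI (h a (by simp)) (ih fun φ hφ => h φ (by simp [hφ]))

def fml (x : ℕ × MTree) : SPF := .dia x.1 x.2.toFormula

theorem diamL_eq (Γ : List (ℕ × MTree)) : diamL Γ = bigAnd (Γ.map fml) := by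
  induction Γ with
  | nil => rfl
  | cons x Γ ih => obtain ⟨α, S⟩ := x; simp [diamL, bigAnd, ih, fml]

theorem toFormula_node (Δ : List ℕ) (Γ : List (ℕ × MTree)) :
    (MTree.node Δ Γ).toFormula = .and (bigAnd (Δ.map .var)) (bigAnd (Γ.map fml)) := by
  rw [MTree.toFormula, diamL_eq]

theorem elem_derive {Δ Γ} {x : ℕ × MTree} (h : x ∈ Γ) :
    RC (MTree.node Δ Γ).toFormula (fml x) := by
  rw [toFormula_node]
  exact .cut (.andE₂ _ _) (bigAnd_elim (List.mem_map_of_mem h))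

theorem node_derive {Δ Γ Γ'}
    (hΓ : ∀ x ∈ Γ', RC (MTree.node Δ Γ).toFormula (fml x)) :
    RC (MTree.node Δ Γ).toFormula (MTree.node Δ Γ').toFormula := by
  rw [toFormula_node, toFormula_node]
  refine .andI (.cut (.andE₁ _ _) (.id _)) (bigAnd_intro ?_)
  intro φ hφ
  obtain ⟨x, hx, rfl⟩ := List.mem_map.mp hφ
  rw [← toFormula_node]
  exact hΓ x hx

theorem node_subset {Δ Δ' Γ Γ'} (hΔ : ∀ p ∈ Δ', p ∈ Δ) (hΓ : ∀ x ∈ Γ', x ∈ Γ) :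
    RC (MTree.node Δ Γ).toFormula (MTree.node Δ' Γ').toFormula := by
  rw [toFormula_node, toFormula_node]
  refine RC.and_mono (bigAnd_intro ?_) (bigAnd_intro ?_)
  · intro φ hφ
    obtain ⟨p, hp, rfl⟩ := List.mem_map.mp hφ
    exact bigAnd_elim (List.mem_map_of_mem (hΔ p hp))
  · intro φ hφ
    obtain ⟨x, hx, rfl⟩ := List.mem_map.mp hφ
    exact bigAnd_elim (List.mem_map_of_mem (hΓ x hx))

theorem rootStep_sound {r : Rule} {T S : MTree} (h : RootStep r T S) :
    RC T.toFormula S.toFormula := by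
  cases h with
  | @rhoP Δ Γ i p hi h =>
    have hp : p ∈ Δ := mem_of_get? h
    exact node_subset (by intro q hq; rcases List.mem_cons.mp hq with rfl | hq <;> [exact hp; exact hq])
      (fun x hx => hx)
  | rhoM hi h =>
    exact node_subset (fun p hp => List.eraseIdx_subset hp) (fun x hx => hx)
  | @sigma Δ Γ i j x y hi hj hij hx hy =>
    refine node_subset (fun p hp => hp) ?_
    intro z hz
    rcases List.mem_or_eq_of_mem_set hz with hz | rfl
    · rcases List.mem_or_eq_of_mem_set hz with hz | rfl
      · exact hz
      · exact mem_of_get? hx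
    · exact mem_of_get? hy
  | @piP Δ Γ i x hi hx =>
    refine node_subset (fun p hp => hp) ?_
    intro z hz
    rcases List.mem_cons.mp hz with rfl | hz
    · exact mem_of_get? hx
    · exact hz
  | piM hi h =>
    exact node_subset (fun p hp => hp) (fun x hx => List.eraseIdx_subset hx)
  | @four Δ Γ i j β Δt Γt S hi hj hΓ hΓt =>
    refine node_derive ?_
    intro z hz
    rcases List.mem_or_eq_of_mem_set hz with hz | rfl
    · exact elem_derive hz
    · -- derive dia β S.toFormula
      have h1 : RC (MTree.node Δ Γ).toFormula (fml (β, MTree.node Δt Γt)) :=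
        elem_derive (mem_of_get? hΓ)
      have h2 : RC (MTree.node Δt Γt).toFormula (.dia β S.toFormula) := by
        rw [toFormula_node]
        exact .cut (.andE₂ _ _)
          (bigAnd_elim (List.mem_map_of_mem (mem_of_get? hΓt)))
      exact .cut h1 (.cut (.dist β h2) (.trans β S.toFormula))
  | @lam Δ Γ i α β S hi hβ hΓ =>
    refine node_derive ?_
    intro z hz
    rcases List.mem_or_eq_of_mem_set hz with hz | rfl
    · exact elem_derive hz
    · show RC _ (SPF.dia β S.toFormula)
      exact .cut (elem_derive (mem_of_get? hΓ)) (.mono S.toFormula hβ)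
  | @jay Δ Γ i j α β Δt Γt S hi hj hij hβ hΓi hΓj =>
    refine node_derive ?_
    intro z hz
    have hz' := List.eraseIdx_subset hz
    rcases List.mem_or_eq_of_mem_set hz' with hz' | rfl
    · exact elem_derive hz'
    · have h1 : RC (MTree.node Δ Γ).toFormula (fml (α, MTree.node Δt Γt)) :=
        elem_derive (mem_of_get? hΓi)
      have h2 : RC (MTree.node Δ Γ).toFormula (fml (β, S)) :=
        elem_derive (mem_of_get? hΓj)
      have h3 : RC (SPF.and (.dia α (MTree.node Δt Γt).toFormula) (.dia β S.toFormula))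
          (.dia α (.and (MTree.node Δt Γt).toFormula (.dia β S.toFormula))) :=
        .jax _ _ hβ
      have h4 : RC (SPF.and (MTree.node Δt Γt).toFormula (.dia β S.toFormula))
          (MTree.node Δt (Γt ++ [(β, S)])).toFormula := by
        rw [toFormula_node, toFormula_node]
        refine .andI (.cut (.andE₁ _ _) (.andE₁ _ _)) (bigAnd_intro ?_)
        intro φ hφ
        rw [List.map_append, List.mem_append] at hφ
        rcases hφ with hφ | hφ
        · exact .cut (.andE₁ _ _) (.cut (.andE₂ _ _) (bigAnd_elim hφ))
        · simp [fml] at hφ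
          subst hφ
          exact .andE₂ _ _
      exact .cut (.andI h1 h2) (.cut h3 (.dist α h4))

theorem replace_sound : ∀ (k : List ℕ) (T S : MTree), T.IsPos k →
    RC (T.subtree k).toFormula S.toFormula →
    RC T.toFormula (T.replace S k).toFormula := by
  intro k
  induction k with
  | nil =>
    intro T S _ h
    simpa [MTree.subtree, MTree.replace] using h
  | cons i k ih =>
    have aux : ∀ (Γ : List (ℕ × MTree)) (i : ℕ) (d S : MTree),
        isPosL Γ i k → RC (subtreeL d Γ i k).toFormula S.toFormula →
        RC (diamL Γ) (diamL (replaceL Γ S i k)) := by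
      intro Γ
      induction Γ with
      | nil => intro i d S h; simp [isPosL] at h
      | cons x Γ ihΓ =>
        intro i d S h hrc
        match i with
        | 0 => simp [isPosL] at h
        | 1 =>
          obtain ⟨α, C⟩ := x
          have h' : C.IsPos k := h
          have hrc' : RC (C.subtree k).toFormula S.toFormula := hrc
          show RC (diamL ((α, C) :: Γ)) (diamL ((α, C.replace S k) :: Γ))
          exact RC.and_mono (.dist α (ih C S h' hrc')) (.id _)
        | n+2 =>
          obtain ⟨α, C⟩ := x
          have h' : isPosL Γ (n+1) k := h
          have hrc' : RC (subtreeL d Γ (n+1) k).toFormula S.toFormula := hrc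
          show RC (diamL ((α, C) :: Γ)) (diamL ((α, C) :: replaceL Γ S (n+1) k))
          exact RC.and_mono (.id _) (ihΓ (n+1) d S h' hrc')
    intro T S hpos hrc
    obtain ⟨Δ, Γ⟩ := T
    have hpos' : isPosL Γ i k := hpos
    have hrc' : RC (subtreeL (MTree.node Δ Γ) Γ i k).toFormula S.toFormula := hrc
    show RC (MTree.node Δ Γ).toFormula (MTree.node Δ (replaceL Γ S i k)).toFormula
    rw [MTree.toFormula, MTree.toFormula]
    exact RC.and_mono (.id _) (aux Γ i (MTree.node Δ Γ) S hpos' hrc')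

theorem step_sound {T T' : MTree} (h : Step T T') :
    RC T.toFormula T'.toFormula := by
  obtain ⟨r, k, S, hpos, hroot, rfl⟩ := h
  exact replace_sound k T S hpos (rootStep_sound hroot)

end TRC

/-- Adequacy: if `T ↪* T'` then `ℱ(T) ⊢_{RC} ℱ(T')`. -/
theorem adequacy (T T' : TRC.MTree) (h : TRC.Steps T T') :
    TRC.RC T.toFormula T'.toFormula := by
  induction h with
  | refl => exact .id _
  | tail _ hstep ih => exact .cut ih (TRC.step_sound hstep)
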